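/- Let r, s ∈ (0, 1) be real numbers satisfying r > 1/2 or s < 1/2, and consider the vectors u = (r − 1/2, −1) and v = (1, s − 1/2) in the Euclidean plane ℝ². Then the cosine of the angle between u and v equals (r − s)/(√(1 + (r − 1/2)²)·√(1 + (s − 1/2)²)), i.e. ⟨u, v⟩/(‖u‖·‖v‖) = (r − s)/(√(1 + (r − 1/2)²)·√(1 + (s − 1/2)²)), and this value lies strictly between −1/√5 and 4/5. -/

import Mathlib

open RealInnerProductSpace

/-- The vector `(a, b)` in the Euclidean plane `ℝ²`. -/
noncomputable def vec2 (a b : ℝ) : EuclideanSpace ℝ (Fin 2) :=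
  (WithLp.equiv 2 (Fin 2 → ℝ)).symm ![a, b]

lemma stmt4_aux (a b p q t : ℝ) (ha2 : a ^ 2 < 1 / 4) (hb2 : b ^ 2 < 1 / 4)
    (hp2 : p ^ 2 = 1 + a ^ 2) (hq2 : q ^ 2 = 1 + b ^ 2) (ht2 : t ^ 2 = 5)
    (hp0 : 0 < p) (hq0 : 0 < q) (ht0 : 0 < t) (hab : 0 < a ∨ b < 0) :
    -(1 / t) < (a - b) / (p * q) ∧ (a - b) / (p * q) < 4 / 5 := by
  have hp1 : 1 ≤ p := by nlinarith [sq_nonneg a]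
  have hq1 : 1 ≤ q := by nlinarith [sq_nonneg b]
  have hpq0 : 0 < p * q := mul_pos hp0 hq0
  constructor
  · have hmain : t * (b - a) < p * q := by
      rcases hab with h | h
      · have htb : t * b < q := by
          nlinarith [mul_pos ht0 hq0, sq_nonneg (t * b - q), sq_nonneg (t * b + q)]
        nlinarith [mul_pos ht0 h, mul_nonneg (sub_nonneg.mpr hp1) hq0.le]
      · have hta : t * (-a) < p := by
          nlinarith [mul_pos ht0 hp0, sq_nonneg (t * a + p), sq_nonneg (t * a - p)]
        nlinarith [mul_pos ht0 (neg_pos.mpr h), mul_nonneg (sub_nonneg.mpr hq1) hp0.le]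
    rw [show -(1 / t) = (-1) / t by ring, div_lt_div_iff₀ ht0 hpq0]
    nlinarith [hmain]
  · rw [div_lt_iff₀ hpq0]
    have key : 25 * (a - b) ^ 2 < 16 * (p * q) ^ 2 := by
      have h1 : 0 < (1 / 4 - a ^ 2) * (1 / 4 - b ^ 2) :=
        mul_pos (by linarith) (by linarith)
      nlinarith [sq_nonneg (a + b), h1]
    nlinarith [sq_nonneg (5 * (a - b) - 4 * (p * q)), hpq0, key]

/-- For `r, s ∈ (0, 1)` with `r > 1/2` or `s < 1/2`, the cosine of the angle between
`u = (r − 1/2, −1)` and `v = (1, s − 1/2)` equals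
`(r − s)/(√(1 + (r − 1/2)²)·√(1 + (s − 1/2)²))`, and this value lies strictly
between `−1/√5` and `4/5`. -/
theorem stmt4 (r s : ℝ) (hr : r ∈ Set.Ioo (0 : ℝ) 1) (hs : s ∈ Set.Ioo (0 : ℝ) 1)
    (hrs : 1 / 2 < r ∨ s < 1 / 2)
    (u v : EuclideanSpace ℝ (Fin 2))
    (hu : u = vec2 (r - 1 / 2) (-1)) (hv : v = vec2 1 (s - 1 / 2)) :
    ⟪u, v⟫ / (‖u‖ * ‖v‖) =
      (r - s) / (Real.sqrt (1 + (r - 1 / 2) ^ 2) * Real.sqrt (1 + (s - 1 / 2) ^ 2)) ∧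
    -(1 / Real.sqrt 5) <
      (r - s) / (Real.sqrt (1 + (r - 1 / 2) ^ 2) * Real.sqrt (1 + (s - 1 / 2) ^ 2)) ∧
    (r - s) / (Real.sqrt (1 + (r - 1 / 2) ^ 2) * Real.sqrt (1 + (s - 1 / 2) ^ 2)) <
      4 / 5 := by
  obtain ⟨hr0, hr1⟩ := hr
  obtain ⟨hs0, hs1⟩ := hs
  have hinner : ⟪u, v⟫ = r - s := by
    subst hu hv
    simp [vec2, PiLp.inner_apply, Fin.sum_univ_two, WithLp.equiv_symm_apply]
  have hnu : ‖u‖ = Real.sqrt (1 + (r - 1 / 2) ^ 2) := by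
    subst hu
    rw [EuclideanSpace.norm_eq]
    congr 1
    simp [vec2, Fin.sum_univ_two, WithLp.equiv_symm_apply, Real.norm_eq_abs, sq_abs]
    ring
  have hnv : ‖v‖ = Real.sqrt (1 + (s - 1 / 2) ^ 2) := by
    subst hv
    rw [EuclideanSpace.norm_eq]
    congr 1
    simp [vec2, Fin.sum_univ_two, WithLp.equiv_symm_apply, Real.norm_eq_abs, sq_abs]
  have ha2 : (r - 1 / 2) ^ 2 < 1 / 4 := by nlinarith
  have hb2 : (s - 1 / 2) ^ 2 < 1 / 4 := by nlinarith
  have hp2 : Real.sqrt (1 + (r - 1 / 2) ^ 2) ^ 2 = 1 + (r - 1 / 2) ^ 2 :=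
    Real.sq_sqrt (by positivity)
  have hq2 : Real.sqrt (1 + (s - 1 / 2) ^ 2) ^ 2 = 1 + (s - 1 / 2) ^ 2 :=
    Real.sq_sqrt (by positivity)
  have ht2 : Real.sqrt 5 ^ 2 = 5 := Real.sq_sqrt (by norm_num)
  have hp0 : 0 < Real.sqrt (1 + (r - 1 / 2) ^ 2) := Real.sqrt_pos.mpr (by positivity)
  have hq0 : 0 < Real.sqrt (1 + (s - 1 / 2) ^ 2) := Real.sqrt_pos.mpr (by positivity)
  have ht0 : 0 < Real.sqrt 5 := Real.sqrt_pos.mpr (by norm_num)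
  have hab : 0 < r - 1 / 2 ∨ s - 1 / 2 < 0 := by
    rcases hrs with h | h
    · left; linarith
    · right; linarith
  have haux := stmt4_aux (r - 1 / 2) (s - 1 / 2) _ _ _ ha2 hb2 hp2 hq2 ht2 hp0 hq0 ht0 hab
  have hd : r - 1 / 2 - (s - 1 / 2) = r - s := by ring
  rw [hd] at haux
  exact ⟨by rw [hinner, hnu, hnv], haux.1, haux.2⟩
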